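/- Let E be a real inner product space, N ≥ 1 and K ≥ 2 natural numbers, η_l > 0 a step size, and θ ∈ E. Let F_1, …, F_N : E → ℝ be differentiable functions and set F = (1/N)·∑_{i=1}^N F_i, and suppose F attains its infimum F* = inf F. Assume: (i) relaxed bounded gradient dissimilarity for convex objectives: (1/N)·∑_{i=1}^N ‖∇F_i(θ)‖² ≤ G² + 2βB²·(F(θ) − F*) for constants G ≥ 0, B ≥ 1, β > 0; (ii) bounded gradient difference: ‖∇F_i(ψ) − ∇F_i(θ)‖ ≤ ((N−1)/N)·ε for every i and every ψ ∈ E, where ε ≥ 0. On a probability space (Ω, ℱ, P) with filtration (ℱ_k)_{k=0}^K, for each client i define random iterates θ_{i,0} = θ (constant) and θ_{i,k} = θ_{i,k−1} − η_l·G_{i,k}, where G_{i,k} is ℱ_k-measurable, E[G_{i,k} | ℱ_{k−1}] = ∇F_i(θ_{i,k−1}) almost surely, and E[‖G_{i,k} − ∇F_i(θ_{i,k−1})‖² | ℱ_{k−1}] ≤ σ² almost surely. Then the overall drift Γ := (1/(KN))·∑_{k=1}^K ∑_{i=1}^N E[‖θ_{i,k} − θ‖²] satisfies Γ ≤ 4K²η_l²G²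 + 8βK²η_l²B²·(F(θ) − F*) + 4K²η_l²ε²(N−1)²/N² + 2Kη_l²σ². -/

import Mathlib

open MeasureTheory

set_option maxHeartbeats 1000000

local notation "⟪" x ", " y "⟫" => @inner ℝ _ _ x y

private lemma condExpL2_ae_eq_condexp' {α : Type*} {m m0 : MeasurableSpace α} {μ : Measure α}
    [IsFiniteMeasure μ] (hm : m ≤ m0)
    {E : Type*} [NormedAddCommGroup E] [InnerProductSpace ℝ E] [CompleteSpace E]
    (f : α →₂[μ] E) :
    (condExpL2 E ℝ hm f : α → E) =ᵐ[μ] μ[f|m] := by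
  refine ae_eq_condExp_of_forall_setIntegral_eq hm
    ((Lp.memLp f).integrable (by norm_num))
    (fun s hs hμs => integrableOn_condExpL2_of_measure_ne_top hm hμs.ne f)
    (fun s hs hμs => integral_condExpL2_eq hm f hs hμs.ne)
    (aestronglyMeasurable_condExpL2 hm f)

private lemma integral_inner_eq_zero' {Ω : Type*} {m mΩ : MeasurableSpace Ω} (hm : m ≤ mΩ)
    {μ : Measure Ω} [IsProbabilityMeasure μ]
    {E : Type*} [NormedAddCommGroup E] [InnerProductSpace ℝ E] [CompleteSpace E]
    {f h : Ω → E} (hfm : StronglyMeasurable[m] f) (hf2 : MemLp f 2 μ)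
    (hh2 : MemLp h 2 μ) (hcond : μ[h|m] =ᵐ[μ] 0) :
    ∫ ω, ⟪f ω, h ω⟫ ∂μ = 0 := by
  set fL := hf2.toLp f with hfLdef
  set hL := hh2.toLp h with hhLdef
  have hfL : fL =ᵐ[μ] f := MemLp.coeFn_toLp _
  have hhL : hL =ᵐ[μ] h := MemLp.coeFn_toLp _
  have e1 : ∫ ω, ⟪f ω, h ω⟫ ∂μ = ∫ ω, ⟪hL ω, fL ω⟫ ∂μ := by
    refine integral_congr_ae ?_
    filter_upwards [hfL, hhL] with ω h1 h2
    rw [h1, h2, real_inner_comm]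
  have e3 : (⟪hL, fL⟫ : ℝ) = ⟪(condExpL2 E ℝ hm hL : Ω →₂[μ] E), fL⟫ := by
    exact (inner_condExpL2_eq_inner_fun hm hL fL ⟨f, hfm, hfL⟩).symm
  have e0 : (condExpL2 E ℝ hm hL : Ω → E) =ᵐ[μ] 0 := by
    refine (condExpL2_ae_eq_condexp' hm hL).trans ?_
    exact ((condExp_congr_ae hhL).trans hcond)
  have e4 : (⟪(condExpL2 E ℝ hm hL : Ω →₂[μ] E), fL⟫ : ℝ)
      = ∫ ω, ⟪(condExpL2 E ℝ hm hL : Ω → E) ω, fL ω⟫ ∂μ := L2.inner_def _ _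
  have e5 : ∫ ω, ⟪(condExpL2 E ℝ hm hL : Ω → E) ω, fL ω⟫ ∂μ = 0 := by
    rw [← integral_zero Ω ℝ]
    refine integral_congr_ae ?_
    filter_upwards [e0] with ω h1
    simp [h1]
  rw [e1, ← L2.inner_def, e3, e4, e5]

/-- HarmoFL Theorem 1, convex case (with effective step-size substituted, so that
`η̃²/η_g² = K²η_l²`): under the relaxed bounded gradient dissimilarity
`(1/N)∑‖∇Fᵢ(θ)‖² ≤ G² + 2βB²(F(θ) − F*)` (where `F* = inf F` is attained), bounded
gradient difference `((N−1)/N)·ε`, and unbiased stochastic gradients with conditional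
variance bounded by `σ²`, the overall drift satisfies
`Γ ≤ 4K²η_l²G² + 8βK²η_l²B²(F(θ) − F*) + 4K²η_l²ε²(N−1)²/N² + 2Kη_l²σ²`. -/
theorem harmofl_drift_bound_convex
    {E : Type*} [NormedAddCommGroup E] [InnerProductSpace ℝ E] [CompleteSpace E]
    {Ω : Type*} {mΩ : MeasurableSpace Ω} (P : Measure Ω) [IsProbabilityMeasure P]
    (N K : ℕ) (hN : 1 ≤ N) (hK : 2 ≤ K)
    (ηl : ℝ) (hηl : 0 < ηl) (θ : E)
    (F : Fin N → E → ℝ) (hF : ∀ i, Differentiable ℝ (F i))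
    (G B β ε σ : ℝ) (hG : 0 ≤ G) (hB : 1 ≤ B) (hβ : 0 < β) (hε : 0 ≤ ε)
    -- F attains its infimum F*
    (Fstar : ℝ)
    (hFstar : IsGLB (Set.range fun x => ((1 : ℝ) / N) * ∑ i, F i x) Fstar)
    (hattain : ∃ x : E, ((1 : ℝ) / N) * ∑ i, F i x = Fstar)
    -- (i) relaxed bounded gradient dissimilarity at θ (convex case)
    (hdissim : ((1 : ℝ) / N) * ∑ i, ‖gradient (F i) θ‖ ^ 2 ≤
        G ^ 2 + 2 * β * B ^ 2 * (((1 : ℝ) / N) * ∑ i, F i θ - Fstar))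
    -- (ii) bounded gradient difference
    (hgrad : ∀ (i : Fin N) (ψ : E),
        ‖gradient (F i) ψ - gradient (F i) θ‖ ≤ (((N : ℝ) - 1) / N) * ε)
    -- filtration and stochastic-gradient iterates
    (ℱ : Filtration ℕ mΩ)
    (Gr : Fin N → ℕ → Ω → E) (θit : Fin N → ℕ → Ω → E)
    (h0 : ∀ i, θit i 0 = fun _ => θ)
    (hrec : ∀ (i : Fin N) (k : ℕ), 1 ≤ k → k ≤ K →
        θit i k = fun ω => θit i (k - 1) ω - ηl • Gr i k ω)
    (hmeas : ∀ (i : Fin N) (k : ℕ), 1 ≤ k → k ≤ K →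
        StronglyMeasurable[ℱ k] (Gr i k))
    (hint : ∀ (i : Fin N) (k : ℕ), 1 ≤ k → k ≤ K → Integrable (Gr i k) P)
    (hintsq : ∀ (i : Fin N) (k : ℕ), 1 ≤ k → k ≤ K →
        Integrable (fun ω => ‖Gr i k ω - gradient (F i) (θit i (k - 1) ω)‖ ^ 2) P)
    -- unbiasedness: E[G_{i,k} | ℱ_{k−1}] = ∇F_i(θ_{i,k−1}) a.s.
    (hunbiased : ∀ (i : Fin N) (k : ℕ), 1 ≤ k → k ≤ K →
        P[Gr i k | ℱ (k - 1)] =ᵐ[P] fun ω => gradient (F i) (θit i (k - 1) ω))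
    -- bounded conditional variance
    (hvar : ∀ (i : Fin N) (k : ℕ), 1 ≤ k → k ≤ K →
        ∀ᵐ ω ∂P,
          (P[fun ω' => ‖Gr i k ω' - gradient (F i) (θit i (k - 1) ω')‖ ^ 2 | ℱ (k - 1)]) ω
            ≤ σ ^ 2) :
    ((1 : ℝ) / (K * N)) * ∑ k ∈ Finset.Icc 1 K, ∑ i, ∫ ω, ‖θit i k ω - θ‖ ^ 2 ∂P ≤
      4 * (K : ℝ) ^ 2 * ηl ^ 2 * G ^ 2
        + 8 * β * (K : ℝ) ^ 2 * ηl ^ 2 * B ^ 2 * (((1 : ℝ) / N) * ∑ i, F i θ - Fstar)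
        + 4 * (K : ℝ) ^ 2 * ηl ^ 2 * ε ^ 2 * ((N : ℝ) - 1) ^ 2 / (N : ℝ) ^ 2
        + 2 * (K : ℝ) * ηl ^ 2 * σ ^ 2 := by
  classical
  have hm : ∀ k : ℕ, ℱ k ≤ mΩ := fun k => ℱ.le k
  have hN1 : (1 : ℝ) ≤ (N : ℝ) := by exact_mod_cast hN
  have hK1 : (1 : ℝ) ≤ (K : ℝ) := by exact_mod_cast (le_trans one_le_two hK)
  set c : ℝ := (((N : ℝ) - 1) / N) * ε with hc
  have hc0 : 0 ≤ c := mul_nonneg (div_nonneg (by linarith) (by linarith)) hε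
  have hσ2 : (0 : ℝ) ≤ σ ^ 2 := sq_nonneg σ
  -- key per-client, per-step bound
  have key : ∀ i : Fin N, ∀ k ∈ Finset.Icc 1 K,
      ∫ ω, ‖θit i k ω - θ‖ ^ 2 ∂P ≤
        4 * ηl ^ 2 * (K : ℝ) ^ 2 * ‖gradient (F i) θ‖ ^ 2
          + 4 * ηl ^ 2 * (K : ℝ) ^ 2 * c ^ 2 + 2 * ηl ^ 2 * (K : ℝ) * σ ^ 2 := by
    intro i k hk
    obtain ⟨hk1, hk2⟩ := Finset.mem_Icc.1 hk
    set C : ℝ := ‖gradient (F i) θ‖ + c with hC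
    have hC0 : 0 ≤ C := add_nonneg (norm_nonneg _) hc0
    have hCb : ∀ ψ : E, ‖gradient (F i) ψ‖ ≤ C := by
      intro ψ
      have h1 : ‖gradient (F i) ψ‖ ≤ ‖gradient (F i) ψ - gradient (F i) θ‖
          + ‖gradient (F i) θ‖ := by
        simpa using norm_add_le (gradient (F i) ψ - gradient (F i) θ) (gradient (F i) θ)
      have := hgrad i ψ
      rw [hC]; linarith
    set gj : ℕ → Ω → E := fun j => P[Gr i j | ℱ (j - 1)] with hgj
    set ξ : ℕ → Ω → E := fun j ω => Gr i j ω - gj j ω with hξ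
    have hgj_eq : ∀ j, 1 ≤ j → j ≤ K →
        gj j =ᵐ[P] fun ω => gradient (F i) (θit i (j - 1) ω) := fun j h1 h2 =>
      hunbiased i j h1 h2
    have hgj_sm : ∀ j, StronglyMeasurable[ℱ (j - 1)] (gj j) := fun j =>
      stronglyMeasurable_condExp
    have hgj_int : ∀ j, Integrable (gj j) P := fun j => integrable_condExp
    have hgj_bd : ∀ j, 1 ≤ j → j ≤ K → ∀ᵐ ω ∂P, ‖gj j ω‖ ≤ C := by
      intro j h1 h2
      filter_upwards [hgj_eq j h1 h2] with ω hω
      rw [hω]; exact hCb _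
    have hgj_mem2 : ∀ j, 1 ≤ j → j ≤ K → MemLp (gj j) 2 P := fun j h1 h2 =>
      MemLp.of_bound ((hgj_sm j).mono (hm _)).aestronglyMeasurable C (hgj_bd j h1 h2)
    have hξ_aesm : ∀ j, 1 ≤ j → j ≤ K → AEStronglyMeasurable (ξ j) P := fun j h1 h2 =>
      (((hmeas i j h1 h2).mono (hm j)).aestronglyMeasurable).sub
        (((hgj_sm j).mono (hm _)).aestronglyMeasurable)
    have hξsq_int : ∀ j, 1 ≤ j → j ≤ K →
        Integrable (fun ω => ‖ξ j ω‖ ^ 2) P := by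
      intro j h1 h2
      refine (hintsq i j h1 h2).congr ?_
      filter_upwards [hgj_eq j h1 h2] with ω hω
      simp only [hξ, hω]
    have hξ_mem2 : ∀ j, 1 ≤ j → j ≤ K → MemLp (ξ j) 2 P := fun j h1 h2 =>
      (memLp_two_iff_integrable_sq_norm (hξ_aesm j h1 h2)).2 (hξsq_int j h1 h2)
    have hξ_cond : ∀ j, 1 ≤ j → j ≤ K → P[ξ j | ℱ (j - 1)] =ᵐ[P] 0 := by
      intro j h1 h2
      have hs := condExp_sub (m := ℱ (j - 1)) (μ := P) (hint i j h1 h2) (hgj_int j)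
      have h2' : P[gj j | ℱ (j - 1)] = gj j :=
        condExp_of_stronglyMeasurable (hm _) (hgj_sm j) (hgj_int j)
      refine hs.trans ?_
      rw [h2']
      filter_upwards with ω
      simp [hgj]
    have hξ_var : ∀ j, 1 ≤ j → j ≤ K → ∫ ω, ‖ξ j ω‖ ^ 2 ∂P ≤ σ ^ 2 := by
      intro j h1 h2
      have e1 : ∫ ω, ‖ξ j ω‖ ^ 2 ∂P
          = ∫ ω, ‖Gr i j ω - gradient (F i) (θit i (j - 1) ω)‖ ^ 2 ∂P := by
        refine integral_congr_ae ?_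
        filter_upwards [hgj_eq j h1 h2] with ω hω
        simp only [hξ, hω]
      rw [e1, ← integral_condExp (hm (j - 1))]
      calc ∫ ω, (P[fun ω' => ‖Gr i j ω' - gradient (F i) (θit i (j - 1) ω')‖ ^ 2 |
              ℱ (j - 1)]) ω ∂P
          ≤ ∫ _ω, σ ^ 2 ∂P :=
            integral_mono_ae integrable_condExp (integrable_const _) (hvar i j h1 h2)
        _ = σ ^ 2 := by simp
    -- the noise sums
    set Sf : ℕ → Ω → E := fun n ω => ∑ j ∈ Finset.Icc 1 n, ξ j ω with hSf
    set Af : ℕ → Ω → E := fun n ω => ∑ j ∈ Finset.Icc 1 n, gj j ω with hAf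
    have hSf_sm : ∀ n, n ≤ K → StronglyMeasurable[ℱ n] (Sf n) := by
      intro n hn
      refine Finset.stronglyMeasurable_fun_sum _ fun j hj => ?_
      obtain ⟨hj1, hj2⟩ := Finset.mem_Icc.1 hj
      exact ((hmeas i j hj1 (hj2.trans hn)).mono (ℱ.mono hj2)).sub
        ((hgj_sm j).mono (ℱ.mono ((Nat.sub_le j 1).trans hj2)))
    have hSf_mem2 : ∀ n, n ≤ K → MemLp (Sf n) 2 P := by
      intro n hn
      refine memLp_finset_sum _ fun j hj => ?_
      obtain ⟨hj1, hj2⟩ := Finset.mem_Icc.1 hj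
      exact hξ_mem2 j hj1 (hj2.trans hn)
    have hSf_sqint : ∀ n, n ≤ K → Integrable (fun ω => ‖Sf n ω‖ ^ 2) P := fun n hn =>
      (memLp_two_iff_integrable_sq_norm (hSf_mem2 n hn).aestronglyMeasurable).1
        (hSf_mem2 n hn)
    have hS_bound : ∀ n, n ≤ K → ∫ ω, ‖Sf n ω‖ ^ 2 ∂P ≤ (n : ℝ) * σ ^ 2 := by
      intro n
      induction n with
      | zero =>
        intro _
        have hz : Sf 0 = fun _ => (0 : E) := by
          funext ω; simp [hSf]
        rw [hz]; simp
      | succ n ih =>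
        intro hn1
        have hnK : n ≤ K := Nat.le_of_succ_le hn1
        have h1 : (1 : ℕ) ≤ n + 1 := Nat.succ_le_succ (Nat.zero_le n)
        have hsplit : ∀ ω, Sf (n + 1) ω = Sf n ω + ξ (n + 1) ω := fun ω =>
          Finset.sum_Icc_succ_top h1 _
        have iS := hSf_sqint n hnK
        have iX := hξsq_int (n + 1) h1 hn1
        have iI : Integrable (fun ω => ⟪Sf n ω, ξ (n + 1) ω⟫) P := by
          have hx := L2.integrable_inner (𝕜 := ℝ) (μ := P)
            ((hSf_mem2 n hnK).toLp _) ((hξ_mem2 (n + 1) h1 hn1).toLp _)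
          refine hx.congr ?_
          filter_upwards [MemLp.coeFn_toLp (hSf_mem2 n hnK),
            MemLp.coeFn_toLp (hξ_mem2 (n + 1) h1 hn1)] with ω e1 e2
          rw [e1, e2]
        have cross : ∫ ω, ⟪Sf n ω, ξ (n + 1) ω⟫ ∂P = 0 := by
          have hcond : P[ξ (n + 1) | ℱ n] =ᵐ[P] 0 := by
            simpa using hξ_cond (n + 1) h1 hn1
          exact integral_inner_eq_zero' (hm n) (hSf_sm n hnK) (hSf_mem2 n hnK)
            (hξ_mem2 (n + 1) h1 hn1) hcond
        have expand : ∫ ω, ‖Sf (n + 1) ω‖ ^ 2 ∂P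
            = ∫ ω, ‖Sf n ω‖ ^ 2 ∂P
              + ((2 : ℝ) * ∫ ω, ⟪Sf n ω, ξ (n + 1) ω⟫ ∂P
                + ∫ ω, ‖ξ (n + 1) ω‖ ^ 2 ∂P) := by
          calc ∫ ω, ‖Sf (n + 1) ω‖ ^ 2 ∂P
              = ∫ ω, (‖Sf n ω‖ ^ 2
                  + (2 * ⟪Sf n ω, ξ (n + 1) ω⟫ + ‖ξ (n + 1) ω‖ ^ 2)) ∂P := by
                refine integral_congr_ae (Filter.Eventually.of_forall fun ω => ?_)
                simp only [hsplit ω, norm_add_sq_real]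
                ring
            _ = _ := by
                have iIX : Integrable
                    (fun ω => 2 * ⟪Sf n ω, ξ (n + 1) ω⟫ + ‖ξ (n + 1) ω‖ ^ 2) P :=
                  (iI.const_mul 2).add iX
                have i2I : Integrable (fun ω => 2 * ⟪Sf n ω, ξ (n + 1) ω⟫) P :=
                  iI.const_mul 2
                rw [integral_add iS iIX, integral_add i2I iX, integral_const_mul]
        rw [expand, cross]
        have hv := hξ_var (n + 1) h1 hn1
        have hihn := ih hnK
        have hr : ((n : ℝ) + 1) * σ ^ 2 = (n : ℝ) * σ ^ 2 + σ ^ 2 := by ring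
        push_cast
        linarith
    -- deterministic decomposition of the iterates
    have hdecomp : ∀ n, n ≤ K → ∀ ω,
        θit i n ω = θ - ηl • ∑ j ∈ Finset.Icc 1 n, Gr i j ω := by
      intro n
      induction n with
      | zero =>
        intro _ ω
        rw [h0 i]
        simp
      | succ n ih =>
        intro hn ω
        rw [hrec i (n + 1) (Nat.succ_le_succ (Nat.zero_le n)) hn]
        simp only [Nat.add_sub_cancel]
        rw [ih (Nat.le_of_succ_le hn) ω,
          Finset.sum_Icc_succ_top (Nat.succ_le_succ (Nat.zero_le n)), smul_add, sub_sub]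
    have hAS : ∀ n, ∀ ω : Ω,
        (∑ j ∈ Finset.Icc 1 n, Gr i j ω) = Af n ω + Sf n ω := by
      intro n ω
      rw [hAf, hSf, ← Finset.sum_add_distrib]
      refine Finset.sum_congr rfl fun j _ => ?_
      simp [hξ]
    -- bound on the drift sum Af
    have hAbd : ∀ n, n ≤ K → ∀ᵐ ω ∂P, ‖Af n ω‖ ≤ (n : ℝ) * C := by
      intro n hn
      have hall : ∀ᵐ ω ∂P, ∀ j ∈ Finset.Icc 1 n, ‖gj j ω‖ ≤ C := by
        rw [Filter.eventually_all_finset]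
        intro j hj
        obtain ⟨hj1, hj2⟩ := Finset.mem_Icc.1 hj
        exact hgj_bd j hj1 (hj2.trans hn)
      filter_upwards [hall] with ω hω
      calc ‖Af n ω‖ ≤ ∑ j ∈ Finset.Icc 1 n, ‖gj j ω‖ := norm_sum_le _ _
        _ ≤ ∑ _j ∈ Finset.Icc 1 n, C := Finset.sum_le_sum hω
        _ = (n : ℝ) * C := by
            rw [Finset.sum_const, Nat.card_Icc]
            simp [nsmul_eq_mul]
    have hAf_mem2 : ∀ n, n ≤ K → MemLp (Af n) 2 P := by
      intro n hn
      refine memLp_finset_sum _ fun j hj => ?_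
      obtain ⟨hj1, hj2⟩ := Finset.mem_Icc.1 hj
      exact hgj_mem2 j hj1 (hj2.trans hn)
    have hAf_sqint : ∀ n, n ≤ K → Integrable (fun ω => ‖Af n ω‖ ^ 2) P := fun n hn =>
      (memLp_two_iff_integrable_sq_norm (hAf_mem2 n hn).aestronglyMeasurable).1
        (hAf_mem2 n hn)
    have hA_bound : ∀ n, n ≤ K → ∫ ω, ‖Af n ω‖ ^ 2 ∂P ≤ ((n : ℝ) * C) ^ 2 := by
      intro n hn
      calc ∫ ω, ‖Af n ω‖ ^ 2 ∂P ≤ ∫ _ω, ((n : ℝ) * C) ^ 2 ∂P := by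
            refine integral_mono_ae (hAf_sqint n hn) (integrable_const _) ?_
            filter_upwards [hAbd n hn] with ω hω
            exact pow_le_pow_left₀ (norm_nonneg _) hω 2
        _ = ((n : ℝ) * C) ^ 2 := by simp
    -- assemble the per-step bound
    have hfun : (fun ω => θit i k ω - θ) = fun ω => -(ηl • (Af k ω + Sf k ω)) := by
      funext ω
      rw [hdecomp k hk2 ω, hAS k ω]
      abel
    have hθ_mem2 : MemLp (fun ω => θit i k ω - θ) 2 P := by
      rw [hfun]
      exact (((hAf_mem2 k hk2).add (hSf_mem2 k hk2)).const_smul ηl).neg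
    have hθ_sqint : Integrable (fun ω => ‖θit i k ω - θ‖ ^ 2) P :=
      (memLp_two_iff_integrable_sq_norm hθ_mem2.aestronglyMeasurable).1 hθ_mem2
    have hpt : ∀ ω, ‖θit i k ω - θ‖ ^ 2
        ≤ 2 * ηl ^ 2 * ‖Af k ω‖ ^ 2 + 2 * ηl ^ 2 * ‖Sf k ω‖ ^ 2 := by
      intro ω
      have h1 : ‖θit i k ω - θ‖ = ηl * ‖Af k ω + Sf k ω‖ := by
        rw [show θit i k ω - θ = -(ηl • (Af k ω + Sf k ω)) from congrFun hfun ω,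
          norm_neg, norm_smul, Real.norm_eq_abs, abs_of_pos hηl]
      have h2 : ‖Af k ω + Sf k ω‖ ≤ ‖Af k ω‖ + ‖Sf k ω‖ := norm_add_le _ _
      have h3 : 0 ≤ ‖Af k ω + Sf k ω‖ := norm_nonneg _
      have h4 : ‖θit i k ω - θ‖ ^ 2 = ηl ^ 2 * ‖Af k ω + Sf k ω‖ ^ 2 := by
        rw [h1]; ring
      have h5 : ‖Af k ω + Sf k ω‖ ^ 2 ≤ 2 * ‖Af k ω‖ ^ 2 + 2 * ‖Sf k ω‖ ^ 2 := by
        nlinarith [sq_nonneg (‖Af k ω‖ - ‖Sf k ω‖), norm_nonneg (Af k ω),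
          norm_nonneg (Sf k ω)]
      rw [h4]
      nlinarith [mul_le_mul_of_nonneg_left h5 (sq_nonneg ηl)]
    have hkR : (k : ℝ) ≤ (K : ℝ) := by exact_mod_cast hk2
    have hk0 : (0 : ℝ) ≤ (k : ℝ) := Nat.cast_nonneg k
    calc ∫ ω, ‖θit i k ω - θ‖ ^ 2 ∂P
        ≤ ∫ ω, (2 * ηl ^ 2 * ‖Af k ω‖ ^ 2 + 2 * ηl ^ 2 * ‖Sf k ω‖ ^ 2) ∂P := by
          refine integral_mono hθ_sqint ?_ hpt
          exact ((hAf_sqint k hk2).const_mul _).add ((hSf_sqint k hk2).const_mul _)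
      _ = 2 * ηl ^ 2 * ∫ ω, ‖Af k ω‖ ^ 2 ∂P + 2 * ηl ^ 2 * ∫ ω, ‖Sf k ω‖ ^ 2 ∂P := by
          rw [integral_add ((hAf_sqint k hk2).const_mul _) ((hSf_sqint k hk2).const_mul _),
            integral_const_mul, integral_const_mul]
      _ ≤ 2 * ηl ^ 2 * ((k : ℝ) * C) ^ 2 + 2 * ηl ^ 2 * ((k : ℝ) * σ ^ 2) := by
          have := hA_bound k hk2
          have := hS_bound k hk2
          have h2 : (0 : ℝ) ≤ 2 * ηl ^ 2 := by positivity
          nlinarith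
      _ ≤ 4 * ηl ^ 2 * (K : ℝ) ^ 2 * ‖gradient (F i) θ‖ ^ 2
            + 4 * ηl ^ 2 * (K : ℝ) ^ 2 * c ^ 2 + 2 * ηl ^ 2 * (K : ℝ) * σ ^ 2 := by
          have hC2 : C ^ 2 ≤ 2 * ‖gradient (F i) θ‖ ^ 2 + 2 * c ^ 2 := by
            rw [hC]; nlinarith [sq_nonneg (‖gradient (F i) θ‖ - c)]
          have hkk : ((k : ℝ) * C) ^ 2 ≤ (K : ℝ) ^ 2 * C ^ 2 := by
            have : (k : ℝ) ^ 2 ≤ (K : ℝ) ^ 2 := by nlinarith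
            nlinarith [sq_nonneg C]
          have hks : (k : ℝ) * σ ^ 2 ≤ (K : ℝ) * σ ^ 2 :=
            mul_le_mul_of_nonneg_right hkR hσ2
          have h2pos : (0 : ℝ) ≤ 2 * ηl ^ 2 := by positivity
          have e1 : 2 * ηl ^ 2 * (((k : ℝ) * C) ^ 2)
              ≤ 2 * ηl ^ 2 * ((K : ℝ) ^ 2 * C ^ 2) :=
            mul_le_mul_of_nonneg_left hkk h2pos
          have e2 : (K : ℝ) ^ 2 * C ^ 2
              ≤ (K : ℝ) ^ 2 * (2 * ‖gradient (F i) θ‖ ^ 2 + 2 * c ^ 2) :=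
            mul_le_mul_of_nonneg_left hC2 (by positivity)
          have e4 : 2 * ηl ^ 2 * ((K : ℝ) ^ 2 * C ^ 2)
              ≤ 2 * ηl ^ 2 * ((K : ℝ) ^ 2 * (2 * ‖gradient (F i) θ‖ ^ 2 + 2 * c ^ 2)) :=
            mul_le_mul_of_nonneg_left e2 h2pos
          have e3 : 2 * ηl ^ 2 * ((k : ℝ) * σ ^ 2) ≤ 2 * ηl ^ 2 * ((K : ℝ) * σ ^ 2) :=
            mul_le_mul_of_nonneg_left hks h2pos
          nlinarith [e1, e4, e3]
  -- sum everything up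
  set Bi : Fin N → ℝ := fun i =>
    4 * ηl ^ 2 * (K : ℝ) ^ 2 * ‖gradient (F i) θ‖ ^ 2
      + 4 * ηl ^ 2 * (K : ℝ) ^ 2 * c ^ 2 + 2 * ηl ^ 2 * (K : ℝ) * σ ^ 2 with hBi
  have hsum : ∑ k ∈ Finset.Icc 1 K, ∑ i, ∫ ω, ‖θit i k ω - θ‖ ^ 2 ∂P
      ≤ (K : ℝ) * ∑ i, Bi i := by
    calc ∑ k ∈ Finset.Icc 1 K, ∑ i, ∫ ω, ‖θit i k ω - θ‖ ^ 2 ∂P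
        ≤ ∑ _k ∈ Finset.Icc 1 K, ∑ i, Bi i :=
          Finset.sum_le_sum fun k hk => Finset.sum_le_sum fun i _ => key i k hk
      _ = (K : ℝ) * ∑ i, Bi i := by
          rw [Finset.sum_const, Nat.card_Icc]
          simp [nsmul_eq_mul]
  have hKN : (0 : ℝ) < 1 / ((K : ℝ) * N) := by positivity
  have hNne : (N : ℝ) ≠ 0 := by linarith
  have hKne : (K : ℝ) ≠ 0 := by linarith
  have hsumBi : ∑ i, Bi i = 4 * ηl ^ 2 * (K : ℝ) ^ 2 * ∑ i, ‖gradient (F i) θ‖ ^ 2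
      + (N : ℝ) * (4 * ηl ^ 2 * (K : ℝ) ^ 2 * c ^ 2)
      + (N : ℝ) * (2 * ηl ^ 2 * (K : ℝ) * σ ^ 2) := by
    rw [hBi]
    rw [Finset.sum_add_distrib, Finset.sum_add_distrib, ← Finset.mul_sum,
      Finset.sum_const, Finset.sum_const, Finset.card_univ, Fintype.card_fin]
    simp [nsmul_eq_mul]
  have step1 : ((1 : ℝ) / (K * N)) * ∑ k ∈ Finset.Icc 1 K, ∑ i, ∫ ω, ‖θit i k ω - θ‖ ^ 2 ∂P
      ≤ ((1 : ℝ) / (K * N)) * ((K : ℝ) * ∑ i, Bi i) :=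
    mul_le_mul_of_nonneg_left hsum hKN.le
  have step2 : ((1 : ℝ) / (K * N)) * ((K : ℝ) * ∑ i, Bi i)
      = 4 * ηl ^ 2 * (K : ℝ) ^ 2 * (((1 : ℝ) / N) * ∑ i, ‖gradient (F i) θ‖ ^ 2)
        + 4 * ηl ^ 2 * (K : ℝ) ^ 2 * c ^ 2 + 2 * ηl ^ 2 * (K : ℝ) * σ ^ 2 := by
    rw [hsumBi]
    field_simp
  have hc2 : c ^ 2 = ε ^ 2 * ((N : ℝ) - 1) ^ 2 / (N : ℝ) ^ 2 := by
    rw [hc]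
    field_simp
  have hfac : (0 : ℝ) ≤ 4 * ηl ^ 2 * (K : ℝ) ^ 2 := by positivity
  have step3 := mul_le_mul_of_nonneg_left hdissim hfac
  calc ((1 : ℝ) / (K * N)) * ∑ k ∈ Finset.Icc 1 K, ∑ i, ∫ ω, ‖θit i k ω - θ‖ ^ 2 ∂P
      ≤ 4 * ηl ^ 2 * (K : ℝ) ^ 2 * (((1 : ℝ) / N) * ∑ i, ‖gradient (F i) θ‖ ^ 2)
        + 4 * ηl ^ 2 * (K : ℝ) ^ 2 * c ^ 2 + 2 * ηl ^ 2 * (K : ℝ) * σ ^ 2 := by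
        rw [← step2]; exact step1
    _ ≤ 4 * (K : ℝ) ^ 2 * ηl ^ 2 * G ^ 2
        + 8 * β * (K : ℝ) ^ 2 * ηl ^ 2 * B ^ 2 * (((1 : ℝ) / N) * ∑ i, F i θ - Fstar)
        + 4 * (K : ℝ) ^ 2 * ηl ^ 2 * ε ^ 2 * ((N : ℝ) - 1) ^ 2 / (N : ℝ) ^ 2
        + 2 * (K : ℝ) * ηl ^ 2 * σ ^ 2 := by
        rw [hc2]
        ring_nf
        ring_nf at step3
        linarith
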